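/- Let σ be the logistic squasher and d, k₀, L, n ∈ ℕ with k₀ ≥ 2d, L ≥ 2, and let δ > 0 and a, b ∈ ℝ^d with b^{(l)} − a^{(l)} ≥ 2δ for all l. There exists an explicit set of weight conditions (conditions (le7eq1)–(le7eq10b) of the paper, e.g. c_{1,1,1}^{(L−1)} ≤ −4(n+1), c_{1,k,k}^{(0)} ≤ −(2/δ)log(8d−1) for k ≤ d, c_{1,d+k,k}^{(0)} ≥ (2/δ)log(8d−1), etc.) such that the resulting L-layer logistic network f_{1,1}^{(L)} with k₀ neurons per layer satisfies, for every x ∈ [−1,1]^d: f_{1,1}^{(L)}(x) ≥ 1 − e^{−n} if x ∈ ∏_l [a^{(l)}+δ, b^{(l)}−δ], and f_{1,1}^{(L)}(x) ≤ e^{−n} if x ∉ ∏_l [a^{(l)}−δ, b^{(l)}+δ]. -/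
import Mathlib


/-- The logistic squasher. -/
noncomputable def logistic (x : ℝ) : ℝ := 1 / (1 + Real.exp (-x))

/-- A fully connected feedforward logistic network with `d` inputs and hidden
layers of width `k₀`: `net d k₀ w w0 v v0 (r-1) i x = f_{1,i}^{(r)}(x)`, where
`w, w0` are the first-layer weights `c^{(0)}` and `v r, v0 r` are the weights
`c^{(r)}` feeding layer `r+1`. -/
/- Auxiliary lemmas -/
lemma logistic_pos (t : ℝ) : 0 < logistic t := by
  unfold logistic; positivity

lemma logistic_le_one (t : ℝ) : logistic t ≤ 1 := by
  unfold logistic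
  rw [div_le_one (by positivity)]
  nlinarith [Real.exp_pos (-t)]

lemma logistic_mono : Monotone logistic := by
  intro s t hst
  unfold logistic
  have h1 : (0:ℝ) < 1 + Real.exp (-t) := by positivity
  have h2 : Real.exp (-t) ≤ Real.exp (-s) := Real.exp_le_exp.2 (by linarith)
  exact one_div_le_one_div_of_le h1 (by linarith)

lemma logistic_le_exp (t : ℝ) : logistic t ≤ Real.exp t := by
  unfold logistic
  rw [div_le_iff₀ (by positivity)]
  have h : Real.exp t * Real.exp (-t) = 1 := by rw [← Real.exp_add]; simp
  nlinarith [Real.exp_pos t]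

lemma one_sub_exp_le_logistic (t : ℝ) : 1 - Real.exp (-t) ≤ logistic t := by
  unfold logistic
  rw [le_div_iff₀ (by positivity)]
  nlinarith [Real.exp_pos (-t)]

lemma sum_split {ι : Type*} [Fintype ι] [DecidableEq ι] (g : ι → ℝ) (k : ι) :
    ∑ j, g j = g k + ∑ j ∈ Finset.univ.erase k, g j :=
  (Finset.add_sum_erase _ _ (Finset.mem_univ k)).symm

lemma abs_sum_mul_le {ι : Type*} [Fintype ι] [DecidableEq ι] (g f : ι → ℝ) (k : ι) (B : ℝ)
    (hB : ∀ j, j ≠ k → |g j| ≤ B) (hf : ∀ j, |f j| ≤ 1) (hB0 : 0 ≤ B) :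
    |∑ j ∈ Finset.univ.erase k, g j * f j| ≤ ((Fintype.card ι - 1 : ℕ) : ℝ) * B := by
  calc |∑ j ∈ Finset.univ.erase k, g j * f j|
      ≤ ∑ j ∈ Finset.univ.erase k, |g j * f j| := Finset.abs_sum_le_sum_abs _ _
    _ ≤ ∑ _j ∈ Finset.univ.erase k, B := by
        refine Finset.sum_le_sum fun j hj => ?_
        rw [abs_mul]
        calc |g j| * |f j| ≤ B * 1 :=
              mul_le_mul (hB j (Finset.ne_of_mem_erase hj)) (hf j) (abs_nonneg _) hB0
          _ = B := mul_one B
    _ = _ := by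
        rw [Finset.sum_const, Finset.card_erase_of_mem (Finset.mem_univ k),
          Finset.card_univ, nsmul_eq_mul]

noncomputable def net (d k₀ : ℕ) (w : Fin k₀ → Fin d → ℝ) (w0 : Fin k₀ → ℝ)
    (v : ℕ → Fin k₀ → Fin k₀ → ℝ) (v0 : ℕ → Fin k₀ → ℝ) :
    ℕ → Fin k₀ → (Fin d → ℝ) → ℝ
  | 0, i, x => logistic (∑ j, w i j * x j + w0 i)
  | (r + 1), i, x =>
      logistic (∑ j, v (r + 1) i j * net d k₀ w w0 v v0 r j x + v0 (r + 1) i)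

set_option maxHeartbeats 1600000 in
/-- Lemma 7: an explicit deep logistic network approximating the indicator of
the cube `∏ₗ [a⁽ˡ⁾, b⁽ˡ⁾]` with error `e⁻ⁿ` outside a `δ`-neighbourhood of its
boundary, under the weight conditions (le7eq1)–(le7eq10b) of the paper. -/
theorem stmt_14 (d k₀ L n : ℕ) (hd : 0 < d) (hk₀ : 2 * d ≤ k₀) (hL : 2 ≤ L)
    (δ : ℝ) (hδ : 0 < δ) (a b : Fin d → ℝ) (hab : ∀ l, 2 * δ ≤ b l - a l)
    (w : Fin k₀ → Fin d → ℝ) (w0 : Fin k₀ → ℝ)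
    (v : ℕ → Fin k₀ → Fin k₀ → ℝ) (v0 : ℕ → Fin k₀ → ℝ)
    -- (le7eq1)
    (h1 : v (L - 1) ⟨0, by omega⟩ ⟨0, by omega⟩ ≤ -4 * (n + 1))
    -- (le7eq2)
    (h2 : ∀ j : Fin k₀, 1 ≤ j.val → j.val < 2 * d →
      |v (L - 1) ⟨0, by omega⟩ j - v (L - 1) ⟨0, by omega⟩ ⟨0, by omega⟩| ≤ 1 / (2 * k₀))
    -- (le7eq2b)
    (h2b : ∀ j : Fin k₀, 2 * d ≤ j.val →
      |v (L - 1) ⟨0, by omega⟩ j| ≤ 1 / (2 * k₀))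
    -- (le7eq3)
    (h3 : ∀ k : Fin k₀, k.val < 2 * d →
      |v0 (L - 1) k + (1 / 2) * v (L - 1) ⟨0, by omega⟩ ⟨0, by omega⟩| ≤ 1 / 2)
    -- (le7eq4)
    (h4 : ∀ k : Fin k₀, k.val < 2 * d → ∀ r, 1 ≤ r → r ≤ L - 2 →
      8 * Real.log (8 * d - 1) ≤ v r k k)
    -- (le7eq5)
    (h5 : ∀ k : Fin k₀, k.val < 2 * d → ∀ r, 1 ≤ r → r ≤ L - 2 →
      |v0 r k + (1 / 2) * v r k k| ≤ Real.log (8 * d - 1) / k₀)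
    -- (le7eq6)
    (h6 : ∀ k : Fin k₀, k.val < 2 * d → ∀ r, 1 ≤ r → r ≤ L - 2 →
      ∀ j : Fin k₀, j ≠ k → |v r k j| ≤ Real.log (8 * d - 1) / k₀)
    -- (le7eq7)
    (h7 : ∀ k : Fin d,
      w ⟨k.val, by have := k.isLt; omega⟩ k ≤ -(2 / δ) * Real.log (8 * d - 1))
    -- (le7eq8)
    (h8 : ∀ k : Fin d,
      |w0 ⟨k.val, by have := k.isLt; omega⟩
        + a k * w ⟨k.val, by have := k.isLt; omega⟩ k| ≤ Real.log (8 * d - 1) / d)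
    -- (le7eq8b)
    (h8b : ∀ k : Fin d, ∀ j : Fin d, j ≠ k →
      |w ⟨k.val, by have := k.isLt; omega⟩ j| ≤ Real.log (8 * d - 1) / d)
    -- (le7eq9)
    (h9 : ∀ k : Fin d,
      (2 / δ) * Real.log (8 * d - 1) ≤ w ⟨d + k.val, by have := k.isLt; omega⟩ k)
    -- (le7eq10)
    (h10 : ∀ k : Fin d,
      |w0 ⟨d + k.val, by have := k.isLt; omega⟩
        + b k * w ⟨d + k.val, by have := k.isLt; omega⟩ k| ≤ Real.log (8 * d - 1) / d)
    -- (le7eq10b)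
    (h10b : ∀ k : Fin d, ∀ j : Fin d, j ≠ k →
      |w ⟨d + k.val, by have := k.isLt; omega⟩ j| ≤ Real.log (8 * d - 1) / d) :
    ∀ x : Fin d → ℝ, (∀ l, x l ∈ Set.Icc (-1 : ℝ) 1) →
      ((∀ l, x l ∈ Set.Icc (a l + δ) (b l - δ)) →
        1 - Real.exp (-(n : ℝ)) ≤ net d k₀ w w0 v v0 (L - 1) ⟨0, by omega⟩ x) ∧
      ((¬ ∀ l, x l ∈ Set.Icc (a l - δ) (b l + δ)) →
        net d k₀ w w0 v v0 (L - 1) ⟨0, by omega⟩ x ≤ Real.exp (-(n : ℝ))) := by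
  intro x hx
  have hx1 : ∀ j, |x j| ≤ 1 := fun j => abs_le.2 ⟨(hx j).1, (hx j).2⟩
  have hd1 : (1:ℝ) ≤ (d:ℝ) := by exact_mod_cast hd
  have hdne : (d:ℝ) ≠ 0 := by positivity
  have hy1 : (1:ℝ) < 8 * (d:ℝ) - 1 := by linarith
  set M := Real.log (8 * (d:ℝ) - 1) with hMdef
  have hM : 0 < M := Real.log_pos hy1
  have hk0 : 0 < k₀ := by omega
  have hk0R : (1:ℝ) ≤ (k₀:ℝ) := by exact_mod_cast hk0
  have hk0ne : (k₀:ℝ) ≠ 0 := by positivity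
  set F : ℕ → Fin k₀ → ℝ := fun r j => net d k₀ w w0 v v0 r j x with hFdef
  have hF0eq : ∀ k, F 0 k = logistic (∑ j, w k j * x j + w0 k) := fun k => rfl
  have hFsucc : ∀ r k, F (r+1) k
      = logistic (∑ j, v (r+1) k j * F r j + v0 (r+1) k) := fun r k => rfl
  have hFmem : ∀ r (j : Fin k₀), 0 ≤ F r j ∧ F r j ≤ 1 := by
    intro r j
    match r with
    | 0 => rw [hF0eq]; exact ⟨(logistic_pos _).le, logistic_le_one _⟩
    | (r+1) => rw [hFsucc]; exact ⟨(logistic_pos _).le, logistic_le_one _⟩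
  have hF1 : ∀ r (j : Fin k₀), |F r j| ≤ 1 := fun r j =>
    abs_le.2 ⟨by linarith [(hFmem r j).1], (hFmem r j).2⟩
  -- threshold values of the logistic
  have hval_lo : logistic (-M) = 1 / (8 * (d:ℝ)) := by
    unfold logistic
    rw [neg_neg, hMdef, Real.exp_log (by linarith),
      show (1:ℝ) + (8*(d:ℝ)-1) = 8*d by ring]
  have hval_hi : logistic M = 1 - 1 / (8 * (d:ℝ)) := by
    unfold logistic
    rw [hMdef, Real.exp_neg, Real.exp_log (by linarith)]
    have h8 : (0:ℝ) < 8 * (d:ℝ) - 1 := by linarith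
    field_simp <;> ring
  have hlogle : ∀ t : ℝ, t ≤ -M → logistic t ≤ 1 / (8 * (d:ℝ)) := fun t ht =>
    hval_lo ▸ logistic_mono ht
  have hlogge : ∀ t : ℝ, M ≤ t → 1 - 1 / (8 * (d:ℝ)) ≤ logistic t := fun t ht =>
    hval_hi ▸ logistic_mono ht
  have hd8 : 1 / (8 * (d:ℝ)) ≤ 1 / 8 :=
    one_div_le_one_div_of_le (by norm_num) (by linarith)
  -- first layer error bound
  have base_err : ∀ (k : Fin k₀) (k' : Fin d) (cc : ℝ),
      |w0 k + cc * w k k'| ≤ M / d →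
      (∀ j : Fin d, j ≠ k' → |w k j| ≤ M / d) →
      |(∑ j, w k j * x j + w0 k) - w k k' * (x k' - cc)| ≤ M := by
    intro k k' cc h0 hj
    have hre : (∑ j, w k j * x j + w0 k) - w k k' * (x k' - cc)
        = (w0 k + cc * w k k') + ∑ j ∈ Finset.univ.erase k', w k j * x j := by
      rw [sum_split (fun j => w k j * x j) k']; ring
    rw [hre]
    have htail := abs_sum_mul_le (fun j => w k j) x k' (M / d) hj hx1 (by positivity)
    rw [Fintype.card_fin] at htail
    have hcast : ((d - 1 : ℕ) : ℝ) = (d:ℝ) - 1 := by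
      rw [Nat.cast_sub (by omega : 1 ≤ d)]; norm_num
    rw [hcast] at htail
    calc |(w0 k + cc * w k k') + ∑ j ∈ Finset.univ.erase k', w k j * x j|
        ≤ |w0 k + cc * w k k'| + |∑ j ∈ Finset.univ.erase k', w k j * x j| := abs_add_le _ _
      _ ≤ M / d + ((d:ℝ) - 1) * (M / d) := add_le_add h0 htail
      _ = M := by field_simp <;> ring
  -- first layer, inside the cube
  have base_in : (∀ l, x l ∈ Set.Icc (a l + δ) (b l - δ)) →
      ∀ k : Fin k₀, k.val < 2 * d → F 0 k ≤ 1 / (8 * (d:ℝ)) := by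
    intro hin k hk
    rw [hF0eq]
    apply hlogle
    rcases lt_or_ge k.val d with hkd | hkd
    · have hwk : w k (⟨k.val, hkd⟩ : Fin d) ≤ -(2/δ) * M := h7 ⟨k.val, hkd⟩
      have herr := base_err k ⟨k.val, hkd⟩ (a ⟨k.val, hkd⟩) (h8 ⟨k.val, hkd⟩)
        (h8b ⟨k.val, hkd⟩)
      have hxk : δ ≤ x ⟨k.val, hkd⟩ - a ⟨k.val, hkd⟩ := by
        have := (hin ⟨k.val, hkd⟩).1; linarith
      have hmain : w k ⟨k.val, hkd⟩ * (x ⟨k.val, hkd⟩ - a ⟨k.val, hkd⟩) ≤ -2 * M := by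
        have h1' : w k ⟨k.val, hkd⟩ * (x ⟨k.val, hkd⟩ - a ⟨k.val, hkd⟩)
            ≤ w k ⟨k.val, hkd⟩ * δ := by
          apply mul_le_mul_of_nonpos_left hxk
          have hp : (0:ℝ) < (2/δ) * M := by positivity
          linarith
        have h2' : w k ⟨k.val, hkd⟩ * δ ≤ (-(2/δ) * M) * δ :=
          mul_le_mul_of_nonneg_right hwk hδ.le
        have h3' : (-(2/δ) * M) * δ = -2 * M := by field_simp <;> ring
        linarith
      have := (abs_le.1 herr).2
      linarith
    · set k' : Fin d := ⟨k.val - d, by omega⟩ with hk'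
      set m : Fin k₀ := (⟨d + k'.val, by omega⟩ : Fin k₀) with hm
      have hkk : m = k := by
        rw [hm]; apply Fin.ext; simp [hk']; omega
      rw [← hkk]
      have hwk : (2/δ) * M ≤ w m k' := h9 k'
      have herr := base_err m k' (b k') (h10 k') (h10b k')
      have hxk : x k' - b k' ≤ -δ := by
        have := (hin k').2; linarith
      have hmain : w m k' * (x k' - b k') ≤ -2 * M := by
        have hw0 : 0 ≤ w m k' := le_trans (by positivity) hwk
        have h1' : w m k' * (x k' - b k') ≤ w m k' * (-δ) :=
          mul_le_mul_of_nonneg_left hxk hw0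
        have h2' : w m k' * (-δ) ≤ ((2/δ) * M) * (-δ) :=
          mul_le_mul_of_nonpos_right hwk (by linarith)
        have h3' : ((2/δ) * M) * (-δ) = -2 * M := by field_simp
        linarith
      have := (abs_le.1 herr).2
      linarith
  -- step error bound
  have step_err : ∀ (r : ℕ) (k : Fin k₀), k.val < 2 * d → r + 1 ≤ L - 2 →
      |(∑ j, v (r+1) k j * F r j + v0 (r+1) k) - v (r+1) k k * (F r k - 1/2)| ≤ M := by
    intro r k hk hr2
    have h5' := h5 k hk (r+1) (by omega) hr2
    have h6' := h6 k hk (r+1) (by omega) hr2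
    have hre : (∑ j, v (r+1) k j * F r j + v0 (r+1) k) - v (r+1) k k * (F r k - 1/2)
        = (v0 (r+1) k + (1/2) * v (r+1) k k)
          + ∑ j ∈ Finset.univ.erase k, v (r+1) k j * F r j := by
      rw [sum_split (fun j => v (r+1) k j * F r j) k]; ring
    rw [hre]
    have htail := abs_sum_mul_le (fun j => v (r+1) k j) (F r) k (M / k₀) h6' (hF1 r)
      (by positivity)
    rw [Fintype.card_fin] at htail
    have hcast : ((k₀ - 1 : ℕ) : ℝ) = (k₀:ℝ) - 1 := by
      rw [Nat.cast_sub (by omega : 1 ≤ k₀)]; norm_num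
    rw [hcast] at htail
    calc |(v0 (r+1) k + (1/2) * v (r+1) k k)
          + ∑ j ∈ Finset.univ.erase k, v (r+1) k j * F r j|
        ≤ |v0 (r+1) k + (1/2) * v (r+1) k k|
          + |∑ j ∈ Finset.univ.erase k, v (r+1) k j * F r j| := abs_add_le _ _
      _ ≤ M / k₀ + ((k₀:ℝ) - 1) * (M / k₀) := add_le_add h5' htail
      _ = M := by field_simp <;> ring
  -- inside invariant
  have inv_in : (∀ l, x l ∈ Set.Icc (a l + δ) (b l - δ)) →
      ∀ r, r ≤ L - 2 → ∀ k : Fin k₀, k.val < 2 * d → F r k ≤ 1 / (8 * (d:ℝ)) := by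
    intro hin r
    induction r with
    | zero => exact fun _ => base_in hin
    | succ r ih =>
      intro hr k hk
      have ihk := ih (by omega) k hk
      have herr := step_err r k hk hr
      have h4' := h4 k hk (r+1) (by omega) hr
      have hdiag : v (r+1) k k * (F r k - 1/2) ≤ -3 * M := by
        have ht : F r k - 1/2 ≤ -(3/8) := by linarith
        calc v (r+1) k k * (F r k - 1/2) ≤ 8 * M * (F r k - 1/2) :=
              mul_le_mul_of_nonpos_right h4' (by linarith)
          _ ≤ 8 * M * (-(3/8)) := mul_le_mul_of_nonneg_left ht (by positivity)
          _ = -3 * M := by ring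
      have harg : ∑ j, v (r+1) k j * F r j + v0 (r+1) k ≤ -M := by
        have := (abs_le.1 herr).2; linarith
      rw [hFsucc]; exact hlogle _ harg
  -- outside invariant
  have inv_out : ∀ m : Fin k₀, m.val < 2 * d → 1 - 1 / (8 * (d:ℝ)) ≤ F 0 m →
      ∀ r, r ≤ L - 2 → 1 - 1 / (8 * (d:ℝ)) ≤ F r m := by
    intro m hm hbase r
    induction r with
    | zero => exact fun _ => hbase
    | succ r ih =>
      intro hr
      have ihm := ih (by omega)
      have herr := step_err r m hm hr
      have h4' := h4 m hm (r+1) (by omega) hr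
      have hdiag : 3 * M ≤ v (r+1) m m * (F r m - 1/2) := by
        have ht : (3:ℝ)/8 ≤ F r m - 1/2 := by linarith
        calc (3:ℝ) * M = 8 * M * (3/8) := by ring
          _ ≤ 8 * M * (F r m - 1/2) := mul_le_mul_of_nonneg_left ht (by positivity)
          _ ≤ v (r+1) m m * (F r m - 1/2) :=
              mul_le_mul_of_nonneg_right h4' (by linarith)
      have harg : M ≤ ∑ j, v (r+1) m j * F r j + v0 (r+1) m := by
        have := (abs_le.1 herr).1; linarith
      rw [hFsucc]; exact hlogge _ harg
  -- final layer setup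
  have hL2 : L - 1 = (L - 2) + 1 := by omega
  set i0 : Fin k₀ := ⟨0, by omega⟩ with hi0
  have hi0v : i0.val = 0 := by rw [hi0]
  have h1' : v ((L-2)+1) i0 i0 ≤ -4 * ((n:ℝ) + 1) := by rw [← hL2]; exact h1
  have h2' : ∀ j : Fin k₀, 1 ≤ j.val → j.val < 2 * d →
      |v ((L-2)+1) i0 j - v ((L-2)+1) i0 i0| ≤ 1 / (2 * (k₀:ℝ)) := by rw [← hL2]; exact h2
  have h2b' : ∀ j : Fin k₀, 2 * d ≤ j.val →
      |v ((L-2)+1) i0 j| ≤ 1 / (2 * (k₀:ℝ)) := by rw [← hL2]; exact h2b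
  have h3' : |v0 ((L-2)+1) i0 + (1/2) * v ((L-2)+1) i0 i0| ≤ 1 / 2 := by
    rw [← hL2]; exact h3 i0 (by rw [hi0]; omega)
  set c : ℝ := v ((L-2)+1) i0 i0 with hc
  set z : Fin k₀ → ℝ := F (L - 2) with hz
  set s₁ : Finset (Fin k₀) := Finset.univ.filter (fun j => j.val < 2 * d) with hs₁
  set S : ℝ := ∑ j ∈ s₁, z j with hSdef
  set A : ℝ := ∑ j, v ((L-2)+1) i0 j * z j + v0 ((L-2)+1) i0 with hA
  have hnet : F (L - 1) i0 = logistic A := by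
    rw [hL2, hFsucc, hA, hz]
  have hcard1 : s₁.card = 2 * d := by
    rw [hs₁]
    have hmap : Finset.univ.filter (fun j : Fin k₀ => j.val < 2 * d)
        = Finset.map (Fin.castLEEmb hk₀) Finset.univ := by
      ext j
      simp only [Finset.mem_filter, Finset.mem_univ, true_and, Finset.mem_map]
      constructor
      · intro hj; exact ⟨⟨j.val, hj⟩, rfl⟩
      · rintro ⟨i, rfl⟩
        simpa using i.isLt
    rw [hmap, Finset.card_map, Finset.card_univ, Fintype.card_fin]
  have hcard2 : (Finset.univ.filter (fun j : Fin k₀ => ¬ j.val < 2 * d)).card = k₀ - 2 * d := by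
    have hh := Finset.card_filter_add_card_filter_not
      (s := (Finset.univ : Finset (Fin k₀))) (p := fun j : Fin k₀ => j.val < 2 * d)
    rw [Finset.card_univ, Fintype.card_fin, ← hs₁, hcard1] at hh
    omega
  have hdecomp : A - c * (S - 1/2)
      = (∑ j ∈ s₁, (v ((L-2)+1) i0 j - c) * z j)
        + (∑ j ∈ Finset.univ.filter (fun j : Fin k₀ => ¬ j.val < 2 * d),
            v ((L-2)+1) i0 j * z j)
        + (v0 ((L-2)+1) i0 + (1/2) * c) := by
    have e1 : ∑ j, v ((L-2)+1) i0 j * z j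
        = (∑ j ∈ s₁, v ((L-2)+1) i0 j * z j)
          + ∑ j ∈ Finset.univ.filter (fun j : Fin k₀ => ¬ j.val < 2 * d),
              v ((L-2)+1) i0 j * z j := by
      rw [hs₁]
      exact (Finset.sum_filter_add_sum_filter_not Finset.univ
        (fun j : Fin k₀ => j.val < 2 * d) (fun j => v ((L-2)+1) i0 j * z j)).symm
    have e2 : ∑ j ∈ s₁, v ((L-2)+1) i0 j * z j
        = (∑ j ∈ s₁, (v ((L-2)+1) i0 j - c) * z j) + c * S := by
      rw [hSdef, Finset.mul_sum, ← Finset.sum_add_distrib]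
      exact Finset.sum_congr rfl fun j _ => by ring
    rw [hA, e1, e2]
    ring
  have hE : |A - c * (S - 1/2)| ≤ 1 := by
    have hi0s : i0 ∈ s₁ := by
      rw [hs₁]; exact Finset.mem_filter.2 ⟨Finset.mem_univ _, by omega⟩
    have hb1 : |∑ j ∈ s₁, (v ((L-2)+1) i0 j - c) * z j|
        ≤ (2 * (d:ℝ) - 1) * (1 / (2 * (k₀:ℝ))) := by
      rw [← Finset.add_sum_erase _ _ hi0s, show (v ((L-2)+1) i0 i0 - c) * z i0 = 0 by
        rw [hc]; ring, zero_add]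
      calc |∑ j ∈ s₁.erase i0, (v ((L-2)+1) i0 j - c) * z j|
          ≤ ∑ j ∈ s₁.erase i0, |(v ((L-2)+1) i0 j - c) * z j| :=
            Finset.abs_sum_le_sum_abs _ _
        _ ≤ ∑ _j ∈ s₁.erase i0, 1 / (2 * (k₀:ℝ)) := by
            refine Finset.sum_le_sum fun j hj => ?_
            have hjne : j ≠ i0 := Finset.ne_of_mem_erase hj
            have hjs : j ∈ s₁ := Finset.mem_of_mem_erase hj
            have hjlt : j.val < 2 * d := by
              rw [hs₁] at hjs; exact (Finset.mem_filter.1 hjs).2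
            have hj1 : 1 ≤ j.val := by
              rcases Nat.eq_zero_or_pos j.val with h0 | h0
              · exact absurd (Fin.ext (by rw [h0, hi0v])) hjne
              · exact h0
            rw [abs_mul]
            calc |v ((L-2)+1) i0 j - c| * |z j| ≤ (1 / (2 * (k₀:ℝ))) * 1 :=
                  mul_le_mul (h2' j hj1 hjlt) (hF1 _ j) (abs_nonneg _) (by positivity)
              _ = 1 / (2 * (k₀:ℝ)) := mul_one _
        _ = ((s₁.erase i0).card : ℝ) * (1 / (2 * (k₀:ℝ))) := by
            rw [Finset.sum_const, nsmul_eq_mul]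
        _ = (2 * (d:ℝ) - 1) * (1 / (2 * (k₀:ℝ))) := by
            rw [Finset.card_erase_of_mem hi0s, hcard1,
              Nat.cast_sub (by omega : 1 ≤ 2 * d)]
            push_cast
            ring
    have hb2 : |∑ j ∈ Finset.univ.filter (fun j : Fin k₀ => ¬ j.val < 2 * d),
        v ((L-2)+1) i0 j * z j| ≤ ((k₀:ℝ) - 2 * d) * (1 / (2 * (k₀:ℝ))) := by
      calc |∑ j ∈ Finset.univ.filter (fun j : Fin k₀ => ¬ j.val < 2 * d),
            v ((L-2)+1) i0 j * z j|
          ≤ ∑ j ∈ Finset.univ.filter (fun j : Fin k₀ => ¬ j.val < 2 * d),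
            |v ((L-2)+1) i0 j * z j| := Finset.abs_sum_le_sum_abs _ _
        _ ≤ ∑ _j ∈ Finset.univ.filter (fun j : Fin k₀ => ¬ j.val < 2 * d),
            1 / (2 * (k₀:ℝ)) := by
            refine Finset.sum_le_sum fun j hj => ?_
            have hjge : 2 * d ≤ j.val := by
              have := (Finset.mem_filter.1 hj).2; omega
            rw [abs_mul]
            calc |v ((L-2)+1) i0 j| * |z j| ≤ (1 / (2 * (k₀:ℝ))) * 1 :=
                  mul_le_mul (h2b' j hjge) (hF1 _ j) (abs_nonneg _) (by positivity)
              _ = 1 / (2 * (k₀:ℝ)) := mul_one _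
        _ = (((Finset.univ.filter (fun j : Fin k₀ => ¬ j.val < 2 * d)).card : ℝ))
            * (1 / (2 * (k₀:ℝ))) := by rw [Finset.sum_const, nsmul_eq_mul]
        _ = ((k₀:ℝ) - 2 * d) * (1 / (2 * (k₀:ℝ))) := by
            rw [hcard2, Nat.cast_sub hk₀]
            push_cast
            ring
    have hsum12 : (2 * (d:ℝ) - 1) * (1 / (2 * (k₀:ℝ)))
        + ((k₀:ℝ) - 2 * d) * (1 / (2 * (k₀:ℝ))) ≤ 1 / 2 := by
      have : (2 * (d:ℝ) - 1) * (1 / (2 * (k₀:ℝ)))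
          + ((k₀:ℝ) - 2 * d) * (1 / (2 * (k₀:ℝ))) = 1/2 - 1 / (2 * (k₀:ℝ)) := by
        field_simp <;> ring
      rw [this]
      have : 0 < 1 / (2 * (k₀:ℝ)) := by positivity
      linarith
    rw [hdecomp]
    have t1 := abs_add_le
      ((∑ j ∈ s₁, (v ((L-2)+1) i0 j - c) * z j)
        + (∑ j ∈ Finset.univ.filter (fun j : Fin k₀ => ¬ j.val < 2 * d),
            v ((L-2)+1) i0 j * z j))
      (v0 ((L-2)+1) i0 + (1/2) * c)
    have t2 := abs_add_le (∑ j ∈ s₁, (v ((L-2)+1) i0 j - c) * z j)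
      (∑ j ∈ Finset.univ.filter (fun j : Fin k₀ => ¬ j.val < 2 * d),
        v ((L-2)+1) i0 j * z j)
    linarith [hb1, hb2, h3', hsum12, t1, t2]
  have hSge0 : 0 ≤ S := by
    rw [hSdef]
    exact Finset.sum_nonneg fun j _ => (hFmem (L-2) j).1
  constructor
  · -- inside the cube
    intro hin
    show 1 - Real.exp (-(n:ℝ)) ≤ F (L - 1) i0
    rw [hnet]
    have hSle : S ≤ 1/4 := by
      rw [hSdef]
      calc ∑ j ∈ s₁, z j ≤ ∑ _j ∈ s₁, 1 / (8 * (d:ℝ)) := by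
            refine Finset.sum_le_sum fun j hj => ?_
            have hjlt : j.val < 2 * d := by
              rw [hs₁] at hj; exact (Finset.mem_filter.1 hj).2
            exact inv_in hin (L-2) le_rfl j hjlt
        _ = (s₁.card : ℝ) * (1 / (8 * (d:ℝ))) := by rw [Finset.sum_const, nsmul_eq_mul]
        _ = 1/4 := by
            rw [hcard1]
            push_cast
            field_simp <;> ring
    have hAn : (n:ℝ) ≤ A := by
      have hEc := (abs_le.1 hE).1
      have hp1 : (0:ℝ) ≤ (-c - 4*((n:ℝ)+1)) * (1/4 - S) :=
        mul_nonneg (by linarith) (by linarith)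
      have hp2 : (0:ℝ) ≤ ((n:ℝ)+1) * (1/4 - S) :=
        mul_nonneg (by positivity) (by linarith)
      nlinarith [hp1, hp2, hEc, h1']
    calc 1 - Real.exp (-(n:ℝ)) ≤ 1 - Real.exp (-A) := by
          have := Real.exp_le_exp.2 (neg_le_neg hAn)
          linarith
      _ ≤ logistic A := one_sub_exp_le_logistic A
  · -- outside the cube
    intro hout
    show F (L - 1) i0 ≤ Real.exp (-(n:ℝ))
    rw [hnet]
    push_neg at hout
    obtain ⟨l, hl⟩ := hout
    rw [Set.mem_Icc, not_and_or] at hl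
    push_neg at hl
    obtain ⟨m, hm2d, hbase⟩ : ∃ m : Fin k₀, m.val < 2 * d
        ∧ 1 - 1 / (8 * (d:ℝ)) ≤ F 0 m := by
      rcases hl with hl | hl
      · refine ⟨⟨l.val, by have := l.isLt; omega⟩, show l.val < 2 * d by have := l.isLt; omega, ?_⟩
        rw [hF0eq]
        apply hlogge
        have hwk : w ⟨l.val, by have := l.isLt; omega⟩ l ≤ -(2/δ) * M := h7 l
        have herr := base_err ⟨l.val, by have := l.isLt; omega⟩ l (a l) (h8 l) (h8b l)
        have hxk : x l - a l ≤ -δ := by linarith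
        have hmain : 2 * M ≤ w ⟨l.val, by have := l.isLt; omega⟩ l * (x l - a l) := by
          have hw0 : w ⟨l.val, by have := l.isLt; omega⟩ l ≤ 0 := by
            have hp : (0:ℝ) < (2/δ) * M := by positivity
            linarith
          have ha1 : w ⟨l.val, by have := l.isLt; omega⟩ l * (-δ)
              ≤ w ⟨l.val, by have := l.isLt; omega⟩ l * (x l - a l) :=
            mul_le_mul_of_nonpos_left hxk hw0
          have ha2 : (-(2/δ) * M) * (-δ) ≤ w ⟨l.val, by have := l.isLt; omega⟩ l * (-δ) :=
            mul_le_mul_of_nonpos_right hwk (by linarith)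
          have ha3 : (-(2/δ) * M) * (-δ) = 2 * M := by field_simp <;> ring
          linarith
        have := (abs_le.1 herr).1
        linarith
      · refine ⟨⟨d + l.val, by have := l.isLt; omega⟩, show d + l.val < 2 * d by have := l.isLt; omega, ?_⟩
        rw [hF0eq]
        apply hlogge
        have hwk : (2/δ) * M ≤ w ⟨d + l.val, by have := l.isLt; omega⟩ l := h9 l
        have herr := base_err ⟨d + l.val, by have := l.isLt; omega⟩ l (b l) (h10 l) (h10b l)
        have hxk : δ ≤ x l - b l := by linarith
        have hmain : 2 * M ≤ w ⟨d + l.val, by have := l.isLt; omega⟩ l * (x l - b l) := by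
          have hw0 : 0 ≤ w ⟨d + l.val, by have := l.isLt; omega⟩ l :=
            le_trans (by positivity) hwk
          have ha1 : (2/δ) * M * δ ≤ w ⟨d + l.val, by have := l.isLt; omega⟩ l * (x l - b l) :=
            mul_le_mul hwk hxk hδ.le hw0
          have ha3 : (2/δ) * M * δ = 2 * M := by field_simp <;> ring
          linarith
        have := (abs_le.1 herr).1
        linarith
    have hFm := inv_out m hm2d hbase (L-2) le_rfl
    have hmS : m ∈ s₁ := by
      rw [hs₁]; exact Finset.mem_filter.2 ⟨Finset.mem_univ _, hm2d⟩
    have hSge : 7/8 ≤ S := by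
      have hsingle : z m ≤ S := by
        rw [hSdef]
        exact Finset.single_le_sum (fun j _ => (hFmem (L-2) j).1) hmS
      have hzm : 1 - 1 / (8 * (d:ℝ)) ≤ z m := hFm
      linarith
    have hAn : A ≤ -(n:ℝ) := by
      have hEc := (abs_le.1 hE).2
      have hprod : c * (S - 1/2) ≤ -4 * ((n:ℝ)+1) * (3/8) := by
        calc c * (S - 1/2) ≤ c * (3/8) :=
              mul_le_mul_of_nonpos_left (by linarith) (by linarith)
          _ ≤ -4 * ((n:ℝ)+1) * (3/8) := mul_le_mul_of_nonneg_right h1' (by norm_num)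
      have hn0 : (0:ℝ) ≤ (n:ℝ) := Nat.cast_nonneg n
      linarith
    calc logistic A ≤ Real.exp A := logistic_le_exp A
      _ ≤ Real.exp (-(n:ℝ)) := Real.exp_le_exp.2 hAn
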